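/- Let I_0 be a nonempty finite set and μ : I_0 → ℂ a function with μ_i ∉ ℤ for all i. Then the space M_*[μ] = x^μ ℂ[x_i^{±1} | i ∈ I_0], with p_i acting as the formal partial derivative ∂/∂x_i, q_i as multiplication by x_i, and k as the identity, is an irreducible H_{I_0}-module; moreover every q_i p_i acts semisimply on it, and p_i w ≠ 0 and q_i w ≠ 0 for all nonzero w and all i ∈ I_0. -/

import Mathlib

/-- A level-one module for the Heisenberg Lie algebra `H_I` with basis
`{p_i, q_i, k | i ∈ I}`, relations `[p_i, q_j] = δ_{ij} k`, all other brackets zero,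
where the central element `k` acts as the identity (level `1`). -/
structure HeisenbergRep (I : Type) (W : Type) [AddCommGroup W] [Module ℂ W] where
  p : I → Module.End ℂ W
  q : I → Module.End ℂ W
  comm_pp : ∀ i j, Commute (p i) (p j)
  comm_qq : ∀ i j, Commute (q i) (q j)
  comm_pq_same : ∀ i, p i * q i - q i * p i = 1
  comm_pq_ne : ∀ i j, i ≠ j → Commute (p i) (q j)

namespace HeisenbergRep

variable {I : Type} {W : Type} [AddCommGroup W] [Module ℂ W]

/-- A submodule stable under all the Heisenberg operators. -/
def Stable (ρ : HeisenbergRep I W) (S : Submodule ℂ W) : Prop :=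
  (∀ i, ∀ w ∈ S, ρ.p i w ∈ S) ∧ (∀ i, ∀ w ∈ S, ρ.q i w ∈ S)

/-- `S` is a nonzero stable submodule with no proper nonzero stable submodule. -/
def IsSimpleSub (ρ : HeisenbergRep I W) (S : Submodule ℂ W) : Prop :=
  ρ.Stable S ∧ S ≠ ⊥ ∧ ∀ T : Submodule ℂ W, ρ.Stable T → T ≤ S → T = ⊥ ∨ T = S

/-- Irreducibility of the representation. -/
def IsIrreducible (ρ : HeisenbergRep I W) : Prop := ρ.IsSimpleSub ⊤

end HeisenbergRep

/-- An endomorphism is locally finite if every vector lies in a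
finitely generated (equivalently, finite-dimensional) stable subspace. -/
def Module.End.LocallyFinite {W : Type} [AddCommGroup W] [Module ℂ W]
    (T : Module.End ℂ W) : Prop :=
  ∀ w : W, ∃ S : Submodule ℂ W, w ∈ S ∧ S.FG ∧ ∀ v ∈ S, T v ∈ S

/-- An endomorphism is locally nilpotent if every vector is killed by some power of it. -/
def Module.End.LocallyNilpotent {W : Type} [AddCommGroup W] [Module ℂ W]
    (T : Module.End ℂ W) : Prop :=
  ∀ w : W, ∃ n : ℕ, (T ^ n) w = 0

section Laurent

variable {I₀ : Type} [DecidableEq I₀]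

/-- The action of `p_i = ∂/∂x_i` on `M_*[μ] = x^μ ℂ[x_i^{±1}]`, in the model where the
basis vector `x^{μ+m}` (for `m : I₀ → ℤ`) is the finitely supported function `δ_m`:
`∂/∂x_i · x^{μ+m} = (μ_i + m_i) x^{μ+m} x_i^{-1}`. -/
noncomputable def laurentP (mu : I₀ → ℂ) (i : I₀) :
    Module.End ℂ ((I₀ → ℤ) →₀ ℂ) :=
  Finsupp.lsum ℂ fun m : I₀ → ℤ =>
    (mu i + (m i : ℂ)) • Finsupp.lsingle (Function.update m i (m i - 1))

/-- The action of `q_i = x_i` on `M_*[μ]`: `x_i · x^{μ+m} = x^{μ+m+e_i}`. -/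
noncomputable def laurentQ (i : I₀) : Module.End ℂ ((I₀ → ℤ) →₀ ℂ) :=
  Finsupp.lsum ℂ fun m : I₀ → ℤ =>
    (Finsupp.lsingle (Function.update m i (m i + 1)) : ℂ →ₗ[ℂ] (I₀ → ℤ) →₀ ℂ)

end Laurent

namespace LaurentH
variable {I₀ : Type} [DecidableEq I₀]

lemma laurentP_single (mu : I₀ → ℂ) (i : I₀) (m : I₀ → ℤ) (c : ℂ) :
    laurentP mu i (Finsupp.single m c)
      = (mu i + (m i : ℂ)) • Finsupp.single (Function.update m i (m i - 1)) c := by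
  simp [laurentP, Finsupp.lsum_single]

lemma laurentQ_single (i : I₀) (m : I₀ → ℤ) (c : ℂ) :
    laurentQ i (Finsupp.single m c)
      = Finsupp.single (Function.update m i (m i + 1)) c := by
  simp [laurentQ, Finsupp.lsum_single]

lemma updown (i : I₀) (m : I₀ → ℤ) :
    Function.update (Function.update m i (m i + 1)) i (Function.update m i (m i + 1) i - 1) = m := by
  simp [Function.update_idem]

lemma downup (i : I₀) (m : I₀ → ℤ) :
    Function.update (Function.update m i (m i - 1)) i (Function.update m i (m i - 1) i + 1) = m := by
  simp [Function.update_idem]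

lemma laurentP_apply (mu : I₀ → ℂ) (i : I₀) (w : (I₀ → ℤ) →₀ ℂ) (n : I₀ → ℤ) :
    laurentP mu i w n = (mu i + (n i : ℂ) + 1) * w (Function.update n i (n i + 1)) := by
  classical
  induction w using Finsupp.induction_linear with
  | zero => simp
  | add f g hf hg => simp [hf, hg]; ring
  | single m c =>
    rw [laurentP_single]
    rw [Finsupp.smul_apply]
    rw [Finsupp.single_apply, Finsupp.single_apply]
    by_cases h : m = Function.update n i (n i + 1)
    · subst h
      rw [if_pos (updown i n), if_pos rfl]
      simp only [Function.update_self, smul_eq_mul, Int.cast_add, Int.cast_one]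
      ring
    · rw [if_neg h, if_neg]
      · simp
      · intro hn
        apply h
        rw [← hn, downup]

lemma laurentQ_apply (i : I₀) (w : (I₀ → ℤ) →₀ ℂ) (n : I₀ → ℤ) :
    laurentQ i w n = w (Function.update n i (n i - 1)) := by
  classical
  induction w using Finsupp.induction_linear with
  | zero => simp
  | add f g hf hg => simp [hf, hg]
  | single m c =>
    rw [laurentQ_single, Finsupp.single_apply, Finsupp.single_apply]
    by_cases h : m = Function.update n i (n i - 1)
    · subst h
      rw [if_pos (downup i n), if_pos rfl]
    · rw [if_neg h, if_neg]
      intro hn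
      apply h
      rw [← hn, updown]


lemma laurentQP_apply (mu : I₀ → ℂ) (i : I₀) (w : (I₀ → ℤ) →₀ ℂ) (n : I₀ → ℤ) :
    laurentQ i (laurentP mu i w) n = (mu i + (n i : ℂ)) * w n := by
  rw [laurentQ_apply, laurentP_apply, downup]
  rw [Function.update_self]
  push_cast
  ring

lemma laurentQP_single (mu : I₀ → ℂ) (i : I₀) (m : I₀ → ℤ) (c : ℂ) :
    laurentQ i (laurentP mu i (Finsupp.single m c))
      = (mu i + (m i : ℂ)) • Finsupp.single m c := by
  classical
  ext n
  rw [laurentQP_apply, Finsupp.smul_apply, Finsupp.single_apply]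
  by_cases h : m = n
  · subst h; simp
  · simp [h]

lemma laurentP_ne_zero (mu : I₀ → ℂ) (hmu : ∀ i, ∀ n : ℤ, mu i ≠ (n : ℂ))
    (i : I₀) (w : (I₀ → ℤ) →₀ ℂ) (hw : w ≠ 0) : laurentP mu i w ≠ 0 := by
  intro h
  apply hw
  ext m
  have h2 := congrArg (fun v : (I₀ → ℤ) →₀ ℂ => v (Function.update m i (m i - 1))) h
  simp only [laurentP_apply, Finsupp.coe_zero, Pi.zero_apply] at h2
  rw [downup] at h2
  rcases mul_eq_zero.mp h2 with h3 | h3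
  · exfalso
    apply hmu i (-(Function.update m i (m i - 1) i) - 1)
    push_cast
    linear_combination h3
  · simpa using h3

lemma laurentQ_ne_zero (i : I₀) (w : (I₀ → ℤ) →₀ ℂ) (hw : w ≠ 0) : laurentQ i w ≠ 0 := by
  intro h
  apply hw
  ext m
  have h2 := congrArg (fun v : (I₀ → ℤ) →₀ ℂ => v (Function.update m i (m i + 1))) h
  simp only [laurentQ_apply, Finsupp.coe_zero, Pi.zero_apply] at h2
  rw [updown] at h2
  simpa using h2


variable (mu : I₀ → ℂ)

lemma comm_PP (i j : I₀) : Commute (laurentP mu i) (laurentP mu j) := by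
  rcases eq_or_ne i j with rfl | h
  · exact Commute.refl _
  show _ = _
  apply Finsupp.lhom_ext
  intro m c
  simp only [Module.End.mul_apply, laurentP_single, map_smul,
    Function.update_of_ne h, Function.update_of_ne h.symm]
  rw [Function.update_comm h]
  rw [smul_comm]

lemma comm_QQ (i j : I₀) : Commute (laurentQ i : Module.End ℂ ((I₀ → ℤ) →₀ ℂ)) (laurentQ j) := by
  rcases eq_or_ne i j with rfl | h
  · exact Commute.refl _
  show _ = _
  apply Finsupp.lhom_ext
  intro m c
  simp only [Module.End.mul_apply, laurentQ_single,
    Function.update_of_ne h, Function.update_of_ne h.symm]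
  rw [Function.update_comm h]

lemma comm_PQ_same (i : I₀) :
    laurentP mu i * laurentQ i - laurentQ i * laurentP mu i = 1 := by
  apply Finsupp.lhom_ext
  intro m c
  simp only [LinearMap.sub_apply, Module.End.mul_apply, laurentQ_single, laurentP_single,
    map_smul, laurentQ_single, Module.End.one_apply]
  rw [updown, Function.update_self]
  rw [downup]
  rw [← sub_smul]
  push_cast
  rw [show mu i + (↑(m i) + 1) - (mu i + ↑(m i)) = 1 by ring, one_smul]

lemma comm_PQ_ne (i j : I₀) (h : i ≠ j) :
    Commute (laurentP mu i) (laurentQ j) := by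
  show _ = _
  apply Finsupp.lhom_ext
  intro m c
  simp only [Module.End.mul_apply, laurentQ_single, laurentP_single, map_smul,
    Function.update_of_ne h, Function.update_of_ne h.symm]
  rw [Function.update_comm h]


lemma mu_add_int_ne (hmu : ∀ i, ∀ n : ℤ, mu i ≠ (n : ℂ)) (i : I₀) (z : ℤ) :
    mu i + (z : ℂ) ≠ 0 := by
  intro h
  apply hmu i (-z)
  push_cast
  linear_combination h

section Fin
variable [Fintype I₀]

lemma update_dist_sum (m m' : I₀ → ℤ) (i : I₀) (v : ℤ) :
    ∑ j, ((Function.update m i v) j - m' j).natAbs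
      = (v - m' i).natAbs + ∑ j ∈ Finset.univ.erase i, (m j - m' j).natAbs := by
  rw [← Finset.add_sum_erase _ _ (Finset.mem_univ i)]
  congr 1
  · rw [Function.update_self]
  · apply Finset.sum_congr rfl
    intro j hj
    rw [Function.update_of_ne (Finset.ne_of_mem_erase hj)]

lemma reach (hmu : ∀ i, ∀ n : ℤ, mu i ≠ (n : ℂ)) (T : Submodule ℂ ((I₀ → ℤ) →₀ ℂ))
    (hp : ∀ i, ∀ w ∈ T, laurentP mu i w ∈ T) (hq : ∀ i, ∀ w ∈ T, laurentQ i w ∈ T) :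
    ∀ (d : ℕ) (m m' : I₀ → ℤ), (∑ i, (m i - m' i).natAbs) ≤ d →
      Finsupp.single m (1:ℂ) ∈ T → Finsupp.single m' (1:ℂ) ∈ T := by
  intro d
  induction d with
  | zero =>
    intro m m' hd hm
    have : m = m' := by
      funext j
      have := Finset.sum_eq_zero_iff.mp (Nat.le_zero.mp hd) j (Finset.mem_univ j)
      omega
    rwa [← this]
  | succ d ih =>
    intro m m' hd hm
    rcases eq_or_ne m m' with rfl | hne
    · exact hm
    obtain ⟨i, hi⟩ := Function.ne_iff.mp hne
    have hsplit : ∑ j, (m j - m' j).natAbs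
        = (m i - m' i).natAbs + ∑ j ∈ Finset.univ.erase i, (m j - m' j).natAbs :=
      (Finset.add_sum_erase _ _ (Finset.mem_univ i)).symm
    rcases lt_or_gt_of_ne hi with hlt | hgt
    · have h1 : Finsupp.single (Function.update m i (m i + 1)) (1:ℂ) ∈ T := by
        have := hq i _ hm
        rwa [laurentQ_single] at this
      apply ih _ _ ?_ h1
      rw [update_dist_sum]
      omega
    · have h0 := hp i _ hm
      rw [laurentP_single] at h0
      have hc : (mu i + (m i : ℂ)) ≠ 0 := mu_add_int_ne mu hmu i (m i)
      have h1 : Finsupp.single (Function.update m i (m i - 1)) (1:ℂ) ∈ T := by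
        have h2 := T.smul_mem (mu i + (m i : ℂ))⁻¹ h0
        rwa [smul_smul, inv_mul_cancel₀ hc, one_smul] at h2
      apply ih _ _ ?_ h1
      rw [update_dist_sum]
      omega

lemma extract (T : Submodule ℂ ((I₀ → ℤ) →₀ ℂ))
    (hp : ∀ i, ∀ w ∈ T, laurentP mu i w ∈ T) (hq : ∀ i, ∀ w ∈ T, laurentQ i w ∈ T) :
    ∀ (k : ℕ) (w : (I₀ → ℤ) →₀ ℂ), w.support.card ≤ k → w ∈ T →
      ∀ n ∈ w.support, Finsupp.single n (w n) ∈ T := by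
  intro k
  induction k with
  | zero =>
    intro w hcard _ n hn
    rw [Nat.le_zero, Finset.card_eq_zero] at hcard
    rw [hcard] at hn
    exact absurd hn (Finset.notMem_empty n)
  | succ k ih =>
    intro w hcard hw n hn
    by_cases hall : ∀ m ∈ w.support, m = n
    · have hweq : w = Finsupp.single n (w n) := by
        ext m
        by_cases hm : m ∈ w.support
        · rw [hall m hm]
          simp
        · rw [Finsupp.notMem_support_iff.mp hm, Finsupp.single_apply]
          rw [if_neg]
          intro h
          rw [h] at hn
          exact hm hn
      rw [← hweq]
      exact hw
    · push_neg at hall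
      obtain ⟨m', hm', hm'n⟩ := hall
      obtain ⟨i, hi⟩ := Function.ne_iff.mp hm'n
      set w' := laurentQ i (laurentP mu i w) - (mu i + (m' i : ℂ)) • w with hw'def
      have hw'T : w' ∈ T := sub_mem (hq i _ (hp i _ hw)) (T.smul_mem _ hw)
      have hval : ∀ n', w' n' = ((n' i : ℂ) - (m' i : ℂ)) * w n' := by
        intro n'
        rw [hw'def, Finsupp.sub_apply, Finsupp.smul_apply, laurentQP_apply, smul_eq_mul]
        ring
      have hsupp : w'.support ⊆ w.support.erase m' := by
        intro x hx
        rw [Finsupp.mem_support_iff] at hx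
        rw [hval x] at hx
        rcases mul_ne_zero_iff.mp hx with ⟨hx1, hx2⟩
        rw [Finset.mem_erase]
        refine ⟨?_, Finsupp.mem_support_iff.mpr hx2⟩
        intro hxm
        apply hx1
        rw [hxm, sub_self]
      have hcard' : w'.support.card ≤ k := by
        have h1 := Finset.card_le_card hsupp
        rw [Finset.card_erase_of_mem hm'] at h1
        omega
      have hn' : n ∈ w'.support := by
        rw [Finsupp.mem_support_iff, hval n]
        apply mul_ne_zero
        · rw [sub_ne_zero]
          intro h
          exact hi (Int.cast_injective h).symm
        · exact Finsupp.mem_support_iff.mp hn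
      have hT' := ih w' hcard' hw'T n hn'
      have hc : ((n i : ℂ) - (m' i : ℂ)) ≠ 0 := by
        rw [sub_ne_zero]
        intro h
        exact hi (Int.cast_injective h).symm
      have heq : Finsupp.single n (w n)
          = ((n i : ℂ) - (m' i : ℂ))⁻¹ • Finsupp.single n (w' n) := by
        rw [hval n, Finsupp.smul_single, smul_eq_mul, ← mul_assoc, inv_mul_cancel₀ hc, one_mul]
      rw [heq]
      exact T.smul_mem _ hT'

end Fin
end LaurentH


open Module.End in
/-- For a nonempty finite set `I₀` and `μ : I₀ → ℂ` with no `μ_i` an integer, the space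
`M_*[μ] = x^μ ℂ[x_i^{±1}]` with `p_i = ∂/∂x_i`, `q_i = x_i`, `k = 1` is an irreducible
level-one `H_{I₀}`-module; moreover each `q_i p_i` acts semisimply on it, and
`p_i w ≠ 0` and `q_i w ≠ 0` for every nonzero `w` and every `i`. -/
theorem laurent_module_irreducible
    {I₀ : Type} [Fintype I₀] [Nonempty I₀] [DecidableEq I₀]
    (mu : I₀ → ℂ) (hmu : ∀ i, ∀ n : ℤ, mu i ≠ (n : ℂ)) :
    ∃ ρ : HeisenbergRep I₀ ((I₀ → ℤ) →₀ ℂ),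
      (∀ i, ρ.p i = laurentP mu i) ∧ (∀ i, ρ.q i = laurentQ i) ∧
      ρ.IsIrreducible ∧
      (∀ i, ⨆ c : ℂ, Module.End.eigenspace (ρ.q i * ρ.p i) c = ⊤) ∧
      (∀ i, ∀ w : (I₀ → ℤ) →₀ ℂ, w ≠ 0 → ρ.p i w ≠ 0 ∧ ρ.q i w ≠ 0) := by
  refine ⟨⟨laurentP mu, laurentQ, LaurentH.comm_PP mu, LaurentH.comm_QQ, LaurentH.comm_PQ_same mu, LaurentH.comm_PQ_ne mu⟩,
    fun i => rfl, fun i => rfl, ?_, ?_, ?_⟩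
  · -- irreducibility
    refine ⟨⟨fun i w _ => trivial, fun i w _ => trivial⟩, ?_, ?_⟩
    · intro h
      have h0 : Finsupp.single (0 : I₀ → ℤ) (1:ℂ) ∈ (⊤ : Submodule ℂ ((I₀ → ℤ) →₀ ℂ)) := trivial
      rw [h, Submodule.mem_bot] at h0
      exact one_ne_zero (Finsupp.single_eq_zero.mp h0)
    · intro T hT _
      rcases eq_or_ne T ⊥ with hbot | hbot
      · exact Or.inl hbot
      right
      obtain ⟨w, hwT, hw0⟩ := Submodule.exists_mem_ne_zero_of_ne_bot hbot
      obtain ⟨n, hn⟩ := Finsupp.support_nonempty_iff.mpr hw0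
      have hsn : Finsupp.single n (w n) ∈ T :=
        LaurentH.extract mu T hT.1 hT.2 w.support.card w le_rfl hwT n hn
      have hwn : w n ≠ 0 := Finsupp.mem_support_iff.mp hn
      have hs1 : Finsupp.single n (1:ℂ) ∈ T := by
        have := T.smul_mem (w n)⁻¹ hsn
        rwa [Finsupp.smul_single, smul_eq_mul, inv_mul_cancel₀ hwn] at this
      have hall : ∀ m, Finsupp.single m (1:ℂ) ∈ T := fun m =>
        LaurentH.reach mu hmu T hT.1 hT.2 (∑ i, (n i - m i).natAbs) n m le_rfl hs1
      rw [eq_top_iff]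
      intro v _
      rw [← Finsupp.sum_single v]
      apply Submodule.sum_mem
      intro a _
      have : Finsupp.single a (v a) = v a • Finsupp.single a (1:ℂ) := by
        rw [Finsupp.smul_single, smul_eq_mul, mul_one]
      rw [this]
      exact T.smul_mem _ (hall a)
  · -- semisimplicity of q_i p_i
    intro i
    rw [eq_top_iff]
    intro w _
    induction w using Finsupp.induction_linear with
    | zero => exact Submodule.zero_mem _
    | add f g hf hg => exact Submodule.add_mem _ (hf trivial) (hg trivial)
    | single m c =>
      apply Submodule.mem_iSup_of_mem (mu i + (m i : ℂ))
      rw [Module.End.mem_eigenspace_iff]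
      exact LaurentH.laurentQP_single mu i m c
  · intro i w hw
    exact ⟨LaurentH.laurentP_ne_zero mu hmu i w hw, LaurentH.laurentQ_ne_zero i w hw⟩
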